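/- For every positive integer k, every positive integer n, and every complex number b with Re(b) > 0, (2k-1)! · b^{2k-1} · ∑_{j=0}^{2k-1} ( b^{-j} · (2π)^{-j-1} / ( (j+1)! · (2k-1-j)! ) ) · ∫₀¹ ( -2(2πn)^{j+1} + (2πn - i·log u)^{j+1} + (2πn + i·log u)^{j+1} ) / (1-u)² du = ( (2π)^{-2k} / (2k) ) · ∫₀¹ ( -2(2π(n+b))^{2k} + (2π(n+b) - i·log u)^{2k} + (2π(n+b) + i·log u)^{2k} ) / (1-u)² du, where the integrals are over u ∈ (0,1). -/

import Mathlib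

open Real Complex Finset MeasureTheory

lemma meas_hp (p : ℕ) : Measurable (fun u : ℝ => ((Real.log u : ℂ))^(p+2)/(1-(u:ℂ))^2) := by
  exact ((Complex.measurable_ofReal.comp Real.measurable_log).pow_const (p+2)).div
    ((measurable_const.sub Complex.measurable_ofReal).pow_const 2)

-- |log u| ≤ (1-u)/u for 0 < u ≤ 1
lemma abs_log_le {u : ℝ} (hu : 0 < u) (hu1 : u ≤ 1) : |Real.log u| ≤ (1-u)/u := by
  rw [abs_of_nonpos (Real.log_nonpos hu.le hu1)]
  have := Real.log_le_sub_one_of_pos (inv_pos.2 hu)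
  rw [Real.log_inv] at this
  have h2 : u⁻¹ - 1 = (1-u)/u := by field_simp
  linarith [h2 ▸ this]

-- |log u|^q ≤ (2q)^q * u^(-1/2) for 0 < u
lemma abs_log_pow_le (q : ℕ) (hq : 0 < q) {u : ℝ} (hu : 0 < u) (hu1 : u ≤ 1) :
    |Real.log u| ^ q ≤ (2*q)^q * u ^ (-(1:ℝ)/2) := by
  have hiu : (0:ℝ) < u⁻¹ := inv_pos.2 hu
  have h1 : |Real.log u| = Real.log u⁻¹ := by
    rw [Real.log_inv, abs_of_nonpos (Real.log_nonpos hu.le hu1)]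
  have h2 : Real.log u⁻¹ = (2*q) * Real.log ((u⁻¹) ^ ((1:ℝ)/(2*q))) := by
    rw [Real.log_rpow hiu]
    field_simp
  have h3 : Real.log ((u⁻¹) ^ ((1:ℝ)/(2*q))) ≤ (u⁻¹) ^ ((1:ℝ)/(2*q)) := by
    have := Real.log_le_sub_one_of_pos (Real.rpow_pos_of_pos hiu ((1:ℝ)/(2*q)))
    linarith
  have hql : (0:ℝ) < 2*q := by positivity
  have h4 : |Real.log u| ≤ (2*q) * (u⁻¹) ^ ((1:ℝ)/(2*q)) := by
    rw [h1, h2]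
    exact mul_le_mul_of_nonneg_left h3 hql.le
  calc |Real.log u| ^ q ≤ ((2*q) * (u⁻¹) ^ ((1:ℝ)/(2*q))) ^ q :=
        pow_le_pow_left₀ (abs_nonneg _) h4 q
    _ = (2*q)^q * ((u⁻¹) ^ ((1:ℝ)/(2*q)))^q := mul_pow _ _ q
    _ = (2*q)^q * u ^ (-(1:ℝ)/2) := by
        congr 1
        rw [← Real.rpow_natCast ((u⁻¹) ^ ((1:ℝ)/(2*q))) q, ← Real.rpow_mul hiu.le]
        rw [← Real.rpow_neg_one u, ← Real.rpow_mul hu.le]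
        congr 1
        field_simp

lemma hp_int (p : ℕ) :
    IntervalIntegrable (fun u : ℝ => ((Real.log u : ℂ))^(p+2)/(1-(u:ℂ))^2) volume 0 1 := by
  have hmeas := meas_hp p
  refine IntervalIntegrable.trans (b := 1/2) ?_ ?_
  · -- on [0, 1/2] : dominated by C * u^(-1/2)
    rw [intervalIntegrable_iff, Set.uIoc_of_le (by norm_num : (0:ℝ) ≤ 1/2)]
    have hg : IntegrableOn (fun u : ℝ => 4*(2*(p+2):ℝ)^(p+2) * u ^ (-(1:ℝ)/2)) (Set.Ioc 0 (1/2)) volume := by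
      have := (intervalIntegral.intervalIntegrable_rpow' (a := 0) (b := 1/2)
        (r := -(1:ℝ)/2) (by norm_num)).const_mul (4*(2*(p+2):ℝ)^(p+2))
      rwa [intervalIntegrable_iff, Set.uIoc_of_le (by norm_num : (0:ℝ) ≤ 1/2)] at this
    refine Integrable.mono' hg (hmeas.aestronglyMeasurable.restrict) ?_
    filter_upwards [ae_restrict_mem measurableSet_Ioc] with u hu
    obtain ⟨hu0, hu2⟩ := hu
    have hu1 : u ≤ 1 := by linarith
    have h1u : (0:ℝ) < 1 - u := by linarith
    have hne : (1:ℂ) - (u:ℝ) ≠ 0 := by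
      simp only [ne_eq, sub_eq_zero]
      intro h
      have : (u:ℝ) = 1 := by exact_mod_cast h.symm
      linarith
    rw [norm_div, norm_pow, norm_pow, Complex.norm_real]
    have hb : ‖(1:ℂ) - (u:ℝ)‖ = 1 - u := by
      rw [show (1:ℂ) - (u:ℝ) = ((1-u : ℝ):ℂ) by push_cast; ring, Complex.norm_real, Real.norm_eq_abs,
        abs_of_pos h1u]
    rw [hb, Real.norm_eq_abs]
    have hd : (1/2:ℝ) ≤ 1 - u := by linarith
    have hdiv : |Real.log u| ^ (p+2) / (1-u)^2 ≤ |Real.log u| ^ (p+2) / (1/2)^2 := by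
      apply div_le_div_of_nonneg_left (by positivity) (by norm_num) ?_
      · exact pow_le_pow_left₀ (by norm_num) hd 2
    calc |Real.log u| ^ (p+2) / (1-u)^2 ≤ |Real.log u| ^ (p+2) / (1/2)^2 := hdiv
      _ = 4 * |Real.log u| ^ (p+2) := by ring
      _ ≤ 4 * ((2*(p+2):ℝ)^(p+2) * u ^ (-(1:ℝ)/2)) := by
          have := abs_log_pow_le (p+2) (by omega) hu0 hu1
          push_cast at this ⊢
          nlinarith [Real.rpow_pos_of_pos hu0 (-(1:ℝ)/2)]
      _ = 4*(2*(p+2):ℝ)^(p+2) * u ^ (-(1:ℝ)/2) := by ring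
  · -- on [1/2, 1] : bounded by 2^(p+2)
    rw [intervalIntegrable_iff, Set.uIoc_of_le (by norm_num : (1/2:ℝ) ≤ 1)]
    refine Integrable.mono' (g := fun _ => (2:ℝ)^(p+2)) (integrableOn_const measure_Ioc_lt_top.ne)
      (hmeas.aestronglyMeasurable.restrict) ?_
    filter_upwards [ae_restrict_mem measurableSet_Ioc] with u hu
    obtain ⟨hu2, hu1⟩ := hu
    have hu0 : (0:ℝ) < u := by linarith
    rcases eq_or_lt_of_le hu1 with h1 | h1
    · subst h1
      simp [Real.log_one]
    · have h1u : (0:ℝ) < 1 - u := by linarith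
      rw [norm_div, norm_pow, norm_pow, Complex.norm_real]
      have hb : ‖(1:ℂ) - (u:ℝ)‖ = 1 - u := by
        rw [show (1:ℂ) - (u:ℝ) = ((1-u : ℝ):ℂ) by push_cast; ring, Complex.norm_real, Real.norm_eq_abs,
          abs_of_pos h1u]
      rw [hb, Real.norm_eq_abs]
      have hlog : |Real.log u| ≤ 2*(1-u) := by
        have := abs_log_le hu0 hu1
        have h2 : (1-u)/u ≤ 2*(1-u) := by
          rw [div_le_iff₀ hu0]
          nlinarith
        linarith
      have h2 : |Real.log u| ^ (p+2) ≤ (2*(1-u))^(p+2) :=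
        pow_le_pow_left₀ (abs_nonneg _) hlog (p+2)
      have h3 : (2*(1-u))^(p+2) = 2^(p+2) * (1-u)^p * (1-u)^2 := by
        rw [mul_pow, pow_add (1-u) p 2]; ring
      rw [div_le_iff₀ (by positivity)]
      calc |Real.log u| ^ (p+2) ≤ 2^(p+2) * (1-u)^p * (1-u)^2 := by rw [← h3]; exact h2
        _ ≤ 2^(p+2) * 1 * (1-u)^2 := by
            have h4 : (1-u)^p ≤ 1 := pow_le_one₀ h1u.le (by linarith)
            exact mul_le_mul_of_nonneg_right
              (mul_le_mul_of_nonneg_left h4 (by positivity)) (sq_nonneg _)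
        _ = 2^(p+2) * (1-u)^2 := by ring

-- expansion of binomial with shifted base
lemma expand_aux (K : ℕ) (y z : ℂ) :
    (z + y) ^ K = y ^ K + ∑ j ∈ Finset.range K, z ^ (j+1) * y ^ (K - 1 - j) * (Nat.choose K (j+1) : ℂ) := by
  rw [add_pow, Finset.sum_range_succ']
  simp only [pow_zero, Nat.sub_zero, Nat.choose_zero_right, Nat.cast_one, one_mul, mul_one]
  rw [add_comm]
  congr 1
  refine Finset.sum_congr rfl fun j hj => ?_
  have h : K - (j+1) = K - 1 - j := by omega
  rw [h]

lemma collapse_alg (K : ℕ) (x y L : ℂ) :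
    -2*(x+y)^K + ((x+y) - L)^K + ((x+y) + L)^K
      = ∑ j ∈ Finset.range K, (Nat.choose K (j+1) : ℂ) * y^(K-1-j) *
          (-2*x^(j+1) + (x - L)^(j+1) + (x + L)^(j+1)) := by
  have h1 : (x+y) - L = (x - L) + y := by ring
  have h2 : (x+y) + L = (x + L) + y := by ring
  rw [h1, h2, expand_aux K y x, expand_aux K y (x - L), expand_aux K y (x + L)]
  have : ∀ j ∈ Finset.range K, (Nat.choose K (j+1) : ℂ) * y^(K-1-j) *
          (-2*x^(j+1) + (x - L)^(j+1) + (x + L)^(j+1))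
      = ((x - L) ^ (j+1) * y ^ (K - 1 - j) * (Nat.choose K (j+1) : ℂ)
          + (x + L) ^ (j+1) * y ^ (K - 1 - j) * (Nat.choose K (j+1) : ℂ))
        - 2 * (x ^ (j+1) * y ^ (K - 1 - j) * (Nat.choose K (j+1) : ℂ)) := fun j _ => by ring
  rw [Finset.sum_congr rfl this, Finset.sum_sub_distrib, Finset.sum_add_distrib, ← Finset.mul_sum]
  ring

lemma sym_expand (N : ℕ) (c w : ℂ) :
    -2*c^(N+2) + (c - w)^(N+2) + (c + w)^(N+2)
      = ∑ q ∈ Finset.range (N+1), (Nat.choose (N+2) (q+2) : ℂ) * c^(N-q) *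
          (w^(q+2) + (-w)^(q+2)) := by
  have h1 : c - w = -w + c := by ring
  have h2 : c + w = w + c := by ring
  rw [h1, h2, add_pow, add_pow]
  rw [Finset.sum_range_succ' _ (N+2), Finset.sum_range_succ' _ (N+2)]
  rw [Finset.sum_range_succ' _ (N+1), Finset.sum_range_succ' _ (N+1)]
  simp only [pow_zero, pow_one, Nat.choose_zero_right, Nat.cast_one, one_mul, mul_one,
    Nat.sub_zero]
  have step : -2 * c ^ (N + 2) +
        (∑ k ∈ Finset.range (N + 1), (-w) ^ (k + 1 + 1) * c ^ (N + 2 - (k + 1 + 1)) * ((N + 2).choose (k + 1 + 1) : ℂ) +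
            (-w) ^ (0 + 1) * c ^ (N + 2 - (0 + 1)) * ((N + 2).choose (0 + 1) : ℂ) +
          c ^ (N + 2)) +
      (∑ k ∈ Finset.range (N + 1), w ^ (k + 1 + 1) * c ^ (N + 2 - (k + 1 + 1)) * ((N + 2).choose (k + 1 + 1) : ℂ) +
          w ^ (0 + 1) * c ^ (N + 2 - (0 + 1)) * ((N + 2).choose (0 + 1) : ℂ) +
        c ^ (N + 2))
      = ∑ k ∈ Finset.range (N + 1), ((-w) ^ (k + 1 + 1) * c ^ (N + 2 - (k + 1 + 1)) * ((N + 2).choose (k + 1 + 1) : ℂ)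
          + w ^ (k + 1 + 1) * c ^ (N + 2 - (k + 1 + 1)) * ((N + 2).choose (k + 1 + 1) : ℂ)) := by
    rw [Finset.sum_add_distrib]
    ring
  rw [step]
  have : ∀ q ∈ Finset.range (N+1),
      (-w)^(q+1+1) * c^(N+2-(q+1+1)) * (Nat.choose (N+2) (q+1+1) : ℂ)
        + w^(q+1+1) * c^(N+2-(q+1+1)) * (Nat.choose (N+2) (q+1+1) : ℂ)
      = (Nat.choose (N+2) (q+2) : ℂ) * c^(N-q) * (w^(q+2) + (-w)^(q+2)) := by
    intro q hq
    have h : N+2-(q+1+1) = N - q := by omega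
    rw [h]
    ring
  rw [Finset.sum_congr rfl this]

set_option maxHeartbeats 1000000 in
lemma F_int (c : ℂ) (m : ℕ) :
    IntervalIntegrable (fun u : ℝ =>
      (-2*c^m + (c - Complex.I*(Real.log u:ℂ))^m + (c + Complex.I*(Real.log u:ℂ))^m)
        /(1-(u:ℂ))^2) volume 0 1 := by
  rcases m with _ | _ | N
  ·
    have : (fun u : ℝ =>
        (-2*c^0 + (c - Complex.I*(Real.log u:ℂ))^0 + (c + Complex.I*(Real.log u:ℂ))^0)
          /(1-(u:ℂ))^2) = fun _ => (0:ℂ) := by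
      funext u
      norm_num
    rw [this]
    exact intervalIntegrable_const
  ·
    have : (fun u : ℝ =>
        (-2*c^1 + (c - Complex.I*(Real.log u:ℂ))^1 + (c + Complex.I*(Real.log u:ℂ))^1)
          /(1-(u:ℂ))^2) = fun _ => (0:ℂ) := by
      funext u
      rw [show -2*c^1 + (c - Complex.I*(Real.log u:ℂ))^1 + (c + Complex.I*(Real.log u:ℂ))^1
        = 0 by ring, zero_div]
    rw [this]
    exact intervalIntegrable_const
  ·
    have heq : (fun u : ℝ =>
        (-2*c^(N+2) + (c - Complex.I*(Real.log u:ℂ))^(N+2)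
          + (c + Complex.I*(Real.log u:ℂ))^(N+2))/(1-(u:ℂ))^2)
      = fun u : ℝ => ∑ q ∈ Finset.range (N+1),
          (((N+2).choose (q+2) : ℂ) * c^(N-q) * (Complex.I^(q+2) + (-Complex.I)^(q+2)))
            * (((Real.log u : ℂ))^(q+2)/(1-(u:ℂ))^2) := by
      funext u
      rw [sym_expand N c (Complex.I*(Real.log u:ℂ)), Finset.sum_div]
      refine Finset.sum_congr rfl fun q hq => ?_
      have hneg : (-(Complex.I*(Real.log u:ℂ)))^(q+2) = (-Complex.I)^(q+2) * ((Real.log u:ℂ))^(q+2) := by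
        rw [show -(Complex.I*(Real.log u:ℂ)) = (-Complex.I) * (Real.log u:ℂ) by ring, mul_pow]
      rw [hneg, mul_pow]
      ring
    have hsum := IntervalIntegrable.sum (μ := volume) (a := 0) (b := 1) (f := fun q (u : ℝ) =>
      (((N+2).choose (q+2) : ℂ) * c^(N-q) * (Complex.I^(q+2) + (-Complex.I)^(q+2)))
            * (((Real.log u : ℂ))^(q+2)/(1-(u:ℂ))^2))
      (Finset.range (N+1)) (fun q _ => (hp_int q).const_mul _)
    rw [Finset.sum_fn] at hsum
    exact hsum.congr (fun u _ => (congrFun heq u).symm)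

lemma coeff_id' (k j : ℕ) (hk : 0 < k) (hj : j < 2*k) (b P : ℂ) (hb : b ≠ 0) (hP : P ≠ 0) :
    ((2*k-1).factorial : ℂ) * b^(2*k-1) *
      ((b^j)⁻¹ * (P^(j+1))⁻¹ / (((j+1).factorial : ℂ) * ((2*k-1-j).factorial : ℂ)))
    = ((P^(2*k))⁻¹/(2*k)) * (((2*k).choose (j+1) : ℂ) * (P*b)^(2*k-1-j)) := by
  have hnat : (((j+1).factorial : ℂ)) * ((2*k-1-j).factorial : ℂ) * ((2*k).choose (j+1) : ℂ)
      = (2*k : ℂ) * ((2*k-1).factorial : ℂ) := by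
    have h1 : (j+1).factorial * (2*k-1-j).factorial * ((2*k).choose (j+1))
        = 2*k * (2*k-1).factorial := by
      have h2 := Nat.choose_mul_factorial_mul_factorial (show j+1 ≤ 2*k by omega)
      have h3 : 2*k - (j+1) = 2*k-1-j := by omega
      have h4 : (2*k).factorial = 2*k * (2*k-1).factorial := by
        conv_lhs => rw [show 2*k = (2*k-1)+1 by omega, Nat.factorial_succ]
        congr 1
        omega
      rw [h3] at h2
      calc (j+1).factorial * (2*k-1-j).factorial * ((2*k).choose (j+1))
          = (2*k).choose (j+1) * (j+1).factorial * (2*k-1-j).factorial := by ring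
        _ = (2*k).factorial := h2
        _ = 2*k * (2*k-1).factorial := h4
    exact_mod_cast h1
  have hpow_b : b^(2*k-1) = b^(2*k-1-j) * b^j := by
    rw [← pow_add]; congr 1; omega
  have hpow_P : P^(2*k) = P^(j+1) * P^(2*k-1-j) := by
    rw [← pow_add]; congr 1; omega
  rw [hpow_b, hpow_P, mul_pow]
  have hf1 : ((j+1).factorial : ℂ) ≠ 0 := Nat.cast_ne_zero.2 (Nat.factorial_ne_zero _)
  have hf2 : ((2*k-1-j).factorial : ℂ) ≠ 0 := Nat.cast_ne_zero.2 (Nat.factorial_ne_zero _)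
  have hk0 : (2*(k:ℂ)) ≠ 0 := mul_ne_zero two_ne_zero (Nat.cast_ne_zero.2 (by omega))
  have hbj : b^j ≠ 0 := pow_ne_zero _ hb
  have hPj : P^(j+1) ≠ 0 := pow_ne_zero _ hP
  have hP2 : P^(2*k-1-j) ≠ 0 := pow_ne_zero _ hP
  have hfact : ((2*k-1).factorial : ℂ) = ((j+1).factorial : ℂ) * ((2*k-1-j).factorial : ℂ)
      * ((2*k).choose (j+1) : ℂ) / (2*k) := by
    rw [eq_div_iff hk0]; linear_combination (-1:ℂ) * hnat
  rw [hfact]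
  field_simp

/-- For positive integers `k`, `n` and complex `b` with `Re b > 0`, the weighted sum of
integrals collapses to a single integral with parameter `n + b`. -/
theorem sum_integrals_collapse (k n : ℕ) (hk : 0 < k) (hn : 0 < n) (b : ℂ) (hb : 0 < b.re) :
    (Nat.factorial (2 * k - 1) : ℂ) * b ^ (2 * k - 1) *
        ∑ j ∈ Finset.range (2 * k),
          (b ^ (-(j : ℤ)) * (2 * (Real.pi : ℂ)) ^ (-(j : ℤ) - 1) /
              ((Nat.factorial (j + 1) : ℂ) * (Nat.factorial (2 * k - 1 - j) : ℂ))) *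
            ∫ u in (0:ℝ)..1,
              (-2 * (2 * (Real.pi : ℂ) * n) ^ (j + 1) +
                  (2 * (Real.pi : ℂ) * n - Complex.I * Real.log u) ^ (j + 1) +
                  (2 * (Real.pi : ℂ) * n + Complex.I * Real.log u) ^ (j + 1)) /
                (1 - (u : ℂ)) ^ 2 =
      ((2 * (Real.pi : ℂ)) ^ (-(2 * k : ℤ)) / (2 * k)) *
        ∫ u in (0:ℝ)..1,
          (-2 * (2 * (Real.pi : ℂ) * (n + b)) ^ (2 * k) +
              (2 * (Real.pi : ℂ) * (n + b) - Complex.I * Real.log u) ^ (2 * k) +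
              (2 * (Real.pi : ℂ) * (n + b) + Complex.I * Real.log u) ^ (2 * k)) /
            (1 - (u : ℂ)) ^ 2 := by
  have hb0 : b ≠ 0 := fun h => by simp [h] at hb
  have hπ : (2*(Real.pi:ℂ)) ≠ 0 := by
    simp [Complex.ofReal_ne_zero, Real.pi_ne_zero]
  -- pointwise expansion of the right-hand integrand
  have hptwise : ∀ u : ℝ,
      (-2 * (2 * (Real.pi : ℂ) * (n + b)) ^ (2 * k) +
          (2 * (Real.pi : ℂ) * (n + b) - Complex.I * Real.log u) ^ (2 * k) +
          (2 * (Real.pi : ℂ) * (n + b) + Complex.I * Real.log u) ^ (2 * k)) /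
        (1 - (u : ℂ)) ^ 2
      = ∑ j ∈ Finset.range (2*k),
          (((2*k).choose (j+1) : ℂ) * (2 * (Real.pi : ℂ) * b)^(2*k-1-j)) *
            ((-2 * (2 * (Real.pi : ℂ) * n) ^ (j + 1) +
              (2 * (Real.pi : ℂ) * n - Complex.I * Real.log u) ^ (j + 1) +
              (2 * (Real.pi : ℂ) * n + Complex.I * Real.log u) ^ (j + 1)) /
                (1 - (u : ℂ)) ^ 2) := by
    intro u
    have hxy : 2 * (Real.pi : ℂ) * ((n : ℂ) + b)
        = 2 * (Real.pi : ℂ) * n + 2 * (Real.pi : ℂ) * b := by ring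
    rw [hxy,
      collapse_alg (2*k) (2 * (Real.pi : ℂ) * n) (2 * (Real.pi : ℂ) * b)
        (Complex.I * (Real.log u : ℂ)),
      Finset.sum_div]
    exact Finset.sum_congr rfl fun j hj => (mul_div_assoc _ _ _)
  simp only [hptwise]
  rw [intervalIntegral.integral_finset_sum (μ := volume) (a := (0:ℝ)) (b := (1:ℝ))
    (f := fun j (u : ℝ) =>
      (((2*k).choose (j+1) : ℂ) * (2 * (Real.pi : ℂ) * b)^(2*k-1-j)) *
        ((-2 * (2 * (Real.pi : ℂ) * n) ^ (j + 1) +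
          (2 * (Real.pi : ℂ) * n - Complex.I * Real.log u) ^ (j + 1) +
          (2 * (Real.pi : ℂ) * n + Complex.I * Real.log u) ^ (j + 1)) /
            (1 - (u : ℂ)) ^ 2))
    (fun j _ => (F_int (2 * (Real.pi : ℂ) * n) (j+1)).const_mul _)]
  simp only [intervalIntegral.integral_const_mul]
  rw [Finset.mul_sum, Finset.mul_sum]
  refine Finset.sum_congr rfl fun j hj => ?_
  have hj' : j < 2*k := Finset.mem_range.1 hj
  have hz1 : b^(-(j:ℤ)) = (b^j)⁻¹ := by
    rw [zpow_neg, zpow_natCast]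
  have hz2 : (2*(Real.pi:ℂ))^(-(j:ℤ)-1) = ((2*(Real.pi:ℂ))^(j+1))⁻¹ := by
    rw [show -(j:ℤ)-1 = -((j+1 : ℕ) : ℤ) by push_cast; ring, zpow_neg, zpow_natCast]
  have hz3 : (2*(Real.pi:ℂ))^(-(2*k:ℤ)) = ((2*(Real.pi:ℂ))^(2*k))⁻¹ := by
    rw [show -(2*k:ℤ) = -((2*k : ℕ) : ℤ) by push_cast; ring, zpow_neg, zpow_natCast]
  rw [hz1, hz2, hz3]
  have hco := coeff_id' k j hk hj' b (2*(Real.pi:ℂ)) hb0 hπ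
  linear_combination (∫ u in (0:ℝ)..1,
      (-2 * (2 * (Real.pi : ℂ) * n) ^ (j + 1) +
        (2 * (Real.pi : ℂ) * n - Complex.I * Real.log u) ^ (j + 1) +
        (2 * (Real.pi : ℂ) * n + Complex.I * Real.log u) ^ (j + 1)) /
          (1 - (u : ℂ)) ^ 2) * hco
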